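/- If a Banach space X admits a strictly increasing projectional resolution of the identity (P_α)_{ω≤α≤dens(X)}, then X admits a weak*-null biorthogonal system (x_α, γ_α)_{ω≤α<dens(X)} with ‖x_α‖ = 1 and ‖γ_α‖ ≤ 2 for all α. -/

import Mathlib

open Cardinal Filter Topology

/-- The density character of a topological space: the least cardinality of a dense subset. -/
noncomputable def densityCharacter (X : Type) [TopologicalSpace X] : Cardinal :=
  sInf {c : Cardinal | ∃ s : Set X, Dense s ∧ #s = c}

private lemma statement13_key (X : Type) [NormedAddCommGroup X] [NormedSpace ℝ X]
    [CompleteSpace X]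
    (P : Ordinal.{0} → (X →L[ℝ] X)) (d : Ordinal.{0})
    (hproj : ∀ α, Ordinal.omega0 ≤ α → α ≤ d → ∀ x : X, P α (P α x) = P α x)
    (hrange : ∀ α β, Ordinal.omega0 ≤ α → α ≤ β → β ≤ d →
      Set.range (P α) ⊆ Set.range (P β))
    (hstrict : ∀ α β, Ordinal.omega0 ≤ α → α < β → β ≤ d →
      Set.range (P α) ⊂ Set.range (P β))
    (α : Ordinal) (h1 : Ordinal.omega0 ≤ α) (h2 : α < d) :
    ∃ (x : X) (φ : X →L[ℝ] ℝ), ‖x‖ = 1 ∧ ‖φ‖ = 1 ∧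
      P (α+1) x = x ∧ P α x = 0 ∧ φ x = 1 := by
  have h3 : α + 1 ≤ d := by rw [← Order.succ_eq_add_one]; exact Order.succ_le_of_lt h2
  have h4 : α ≤ d := h2.le
  have hαα : α < α + 1 := by rw [← Order.succ_eq_add_one]; exact Order.lt_succ α
  have h5 : Ordinal.omega0 ≤ α + 1 := h1.trans hαα.le
  obtain ⟨y, hyt, hys⟩ := Set.exists_of_ssubset (hstrict α (α+1) h1 hαα h3)
  have hfix : ∀ u, u ∈ Set.range (P (α+1)) → P (α+1) u = u := by
    rintro u ⟨w, rfl⟩; exact hproj (α+1) h5 h3 w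
  have hy1 : P (α+1) y = y := hfix y hyt
  have hPay : P (α+1) (P α y) = P α y :=
    hfix _ (hrange α (α+1) h1 hαα.le h3 ⟨y, rfl⟩)
  set z := y - P α y with hz
  have hz1 : P (α+1) z = z := by rw [hz, map_sub, hy1, hPay]
  have hz0 : P α z = 0 := by rw [hz, map_sub, hproj α h1 h4 y, sub_self]
  have hzne : z ≠ 0 := by
    intro h
    exact hys ⟨y, (sub_eq_zero.mp h).symm⟩
  set x0 : X := ‖z‖⁻¹ • z with hx0
  have hx0n : ‖x0‖ = 1 := by
    simp [hx0, norm_smul, inv_mul_cancel₀ (norm_ne_zero_iff.mpr hzne)]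
  have hx0ne : x0 ≠ 0 := by intro h; rw [h] at hx0n; simp at hx0n
  obtain ⟨φ, hφ1, hφx⟩ := exists_dual_vector ℝ x0 (norm_ne_zero_iff.mpr hx0ne)
  refine ⟨x0, φ, hx0n, hφ1, ?_, ?_, ?_⟩
  · rw [hx0, map_smul, hz1]
  · rw [hx0, map_smul, hz0, smul_zero]
  · rw [hφx, hx0n]; norm_num

/-- if a Banach space `X` admits a strictly increasing projectional
resolution of the identity `(P_α)_{ω ≤ α ≤ dens X}`, then `X` admits a weak*-null
biorthogonal system `(x_α, γ_α)_{ω ≤ α < dens X}` with `‖x_α‖ = 1` and `‖γ_α‖ ≤ 2`. -/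
theorem statement13 (X : Type) [NormedAddCommGroup X] [NormedSpace ℝ X] [CompleteSpace X]
    (P : Ordinal.{0} → (X →L[ℝ] X))
    (d : Ordinal.{0}) (hd : d = (densityCharacter X).ord)
    -- projections of norm one
    (hproj : ∀ α, Ordinal.omega0 ≤ α → α ≤ d → ∀ x : X, P α (P α x) = P α x)
    (hnorm : ∀ α, Ordinal.omega0 ≤ α → α ≤ d → ‖P α‖ = 1)
    -- `P_{dens X}` is the identity
    (hid : ∀ x : X, P d x = x)
    -- monotonicity of ranges and kernels
    (hrange : ∀ α β, Ordinal.omega0 ≤ α → α ≤ β → β ≤ d →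
      Set.range (P α) ⊆ Set.range (P β))
    (hker : ∀ α β, Ordinal.omega0 ≤ α → α ≤ β → β ≤ d →
      ∀ x : X, P β x = 0 → P α x = 0)
    -- continuity at limit ordinals
    (hlim : ∀ α, Ordinal.omega0 < α → α ≤ d → Order.IsSuccLimit α →
      ∀ x : X, Tendsto (fun β : ↥(Set.Iio α) => P β.1 x) atTop (𝓝 (P α x)))
    -- density condition
    (hdens : ∀ α, Ordinal.omega0 ≤ α → α ≤ d →
      densityCharacter ↥(Set.range (P α)) ≤ α.card)
    -- strictly increasing
    (hstrict : ∀ α β, Ordinal.omega0 ≤ α → α < β → β ≤ d →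
      Set.range (P α) ⊂ Set.range (P β)) :
    ∃ (x : {α : Ordinal.{0} // Ordinal.omega0 ≤ α ∧ α < d} → X)
      (γ : {α : Ordinal.{0} // Ordinal.omega0 ≤ α ∧ α < d} → (X →L[ℝ] ℝ)),
      (∀ α, ‖x α‖ = 1) ∧ (∀ α, ‖γ α‖ ≤ 2) ∧
      (∀ α β, γ α (x β) = if α = β then (1 : ℝ) else 0) ∧
      (∀ v : X, ∀ ε : ℝ, 0 < ε →
        {α : {α : Ordinal.{0} // Ordinal.omega0 ≤ α ∧ α < d} | ε ≤ |γ α v|}.Finite) := by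
  have hsucc : ∀ α : Ordinal, α < d → α + 1 ≤ d := fun α h => by
    rw [← Order.succ_eq_add_one]; exact Order.succ_le_of_lt h
  have hself : ∀ α : Ordinal, α < α + 1 := fun α => by
    rw [← Order.succ_eq_add_one]; exact Order.lt_succ α
  have key : ∀ a : {α : Ordinal.{0} // Ordinal.omega0 ≤ α ∧ α < d},
      ∃ (x : X) (φ : X →L[ℝ] ℝ), ‖x‖ = 1 ∧ ‖φ‖ = 1 ∧
        P (a.1+1) x = x ∧ P a.1 x = 0 ∧ φ x = 1 := fun a =>
    statement13_key X P d hproj hrange hstrict a.1 a.2.1 a.2.2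
  choose x φ hx1 hφ1 hxfix hxker hφx using key
  set γ : {α : Ordinal.{0} // Ordinal.omega0 ≤ α ∧ α < d} → (X →L[ℝ] ℝ) :=
    fun a => (φ a).comp (P (a.1+1) - P a.1) with hγ
  have hγval : ∀ a v, γ a v = φ a (P (a.1+1) v - P a.1 v) := fun a v => rfl
  -- bound on |γ a v|
  have hγbound : ∀ a v, |γ a v| ≤ ‖P (a.1+1) v - P a.1 v‖ := by
    intro a v
    rw [hγval]
    calc |φ a (P (a.1+1) v - P a.1 v)| ≤ ‖φ a‖ * ‖P (a.1+1) v - P a.1 v‖ :=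
          (φ a).le_opNorm _
      _ = ‖P (a.1+1) v - P a.1 v‖ := by rw [hφ1, one_mul]
  refine ⟨x, γ, hx1, ?_, ?_, ?_⟩
  · -- norm bound
    intro a
    have h1 : Ordinal.omega0 ≤ a.1 := a.2.1
    have h2 : a.1 < d := a.2.2
    calc ‖γ a‖ ≤ ‖φ a‖ * ‖P (a.1+1) - P a.1‖ := ContinuousLinearMap.opNorm_comp_le _ _
      _ ≤ 1 * (‖P (a.1+1)‖ + ‖P a.1‖) := by
          rw [hφ1]
          exact mul_le_mul_of_nonneg_left (norm_sub_le _ _) zero_le_one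
      _ = 2 := by
          rw [hnorm (a.1+1) (h1.trans (hself a.1).le) (hsucc a.1 h2),
            hnorm a.1 h1 h2.le]
          norm_num
  · -- biorthogonality
    intro a b
    rcases eq_or_ne a b with rfl | hne
    · rw [if_pos rfl, hγval, hxfix a, hxker a, sub_zero, hφx a]
    · rw [if_neg hne]
      have hvne : a.1 ≠ b.1 := fun h => hne (Subtype.ext h)
      rcases hvne.lt_or_gt with hab | hba
      · -- a < b : x b is killed by P a and P (a+1)
        have hb1 : a.1 + 1 ≤ b.1 := by
          rw [← Order.succ_eq_add_one]; exact Order.succ_le_of_lt hab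
        have h0 : P b.1 (x b) = 0 := hxker b
        have e1 : P (a.1+1) (x b) = 0 :=
          hker (a.1+1) b.1 (a.2.1.trans (hself a.1).le) hb1 b.2.2.le _ h0
        have e2 : P a.1 (x b) = 0 :=
          hker a.1 b.1 a.2.1 hab.le b.2.2.le _ h0
        rw [hγval, e1, e2, sub_zero, map_zero]
      · -- b < a : x b is fixed by P a and P (a+1)
        have hb1 : b.1 + 1 ≤ a.1 := by
          rw [← Order.succ_eq_add_one]; exact Order.succ_le_of_lt hba
        have hmem : x b ∈ Set.range (P (b.1+1)) := ⟨x b, hxfix b⟩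
        have hfixgen : ∀ c : Ordinal, Ordinal.omega0 ≤ c → c ≤ d →
            x b ∈ Set.range (P c) → P c (x b) = x b := by
          rintro c hc1 hc2 ⟨w, hw⟩
          rw [← hw]; exact hproj c hc1 hc2 w
        have e2 : P a.1 (x b) = x b :=
          hfixgen a.1 a.2.1 a.2.2.le
            (hrange (b.1+1) a.1 (b.2.1.trans (hself b.1).le) hb1 a.2.2.le hmem)
        have e1 : P (a.1+1) (x b) = x b :=
          hfixgen (a.1+1) (a.2.1.trans (hself a.1).le) (hsucc a.1 a.2.2)
            (hrange (b.1+1) (a.1+1) (b.2.1.trans (hself b.1).le)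
              (hb1.trans (hself a.1).le) (hsucc a.1 a.2.2) hmem)
        rw [hγval, e1, e2, sub_self, map_zero]
  · -- weak*-null
    intro v ε hε
    by_contra hfin
    replace hfin : Set.Infinite {α : {α : Ordinal.{0} // Ordinal.omega0 ≤ α ∧ α < d} | ε ≤ |γ α v|} := hfin
    set S : Set Ordinal :=
      Subtype.val '' {a : {α : Ordinal.{0} // Ordinal.omega0 ≤ α ∧ α < d} | ε ≤ |γ a v|}
      with hSdef
    have hS : S.Infinite := hfin.image (Set.injOn_of_injective Subtype.val_injective)
    have hSprop : ∀ β ∈ S, Ordinal.omega0 ≤ β ∧ β < d ∧ ε ≤ ‖P (β+1) v - P β v‖ := by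
      rintro β ⟨a, ha, rfl⟩
      exact ⟨a.2.1, a.2.2, ha.trans (hγbound a v)⟩
    set T : Set Ordinal := {β | (S ∩ Set.Iio β).Infinite} with hT
    have hdT : d ∈ T := by
      have hsub : S ⊆ S ∩ Set.Iio d :=
        Set.subset_inter le_rfl (fun β hβ => (hSprop β hβ).2.1)
      exact hS.mono hsub
    have hlT : sInf T ∈ T := csInf_mem (α := Ordinal) ⟨d, hdT⟩
    set l : Ordinal := sInf T with hl
    have hld : l ≤ d := csInf_le' hdT
    have hfinlt : ∀ β < l, (S ∩ Set.Iio β).Finite := by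
      intro β hβ
      by_contra h
      have hβT : β ∈ T := h
      exact absurd (csInf_le' hβT) (not_le.mpr hβ)
    have hl0 : l ≠ 0 := by
      intro h
      have : (S ∩ Set.Iio (0:Ordinal)).Infinite := h ▸ hlT
      refine this ?_
      have : Set.Iio (0:Ordinal) = ∅ := by
        ext β; simp
      rw [this, Set.inter_empty]
      exact Set.finite_empty
    have hllim : Order.IsSuccLimit l := by
      refine Ordinal.isSuccLimit_iff.mpr ⟨hl0, Order.isSuccPrelimit_of_succ_lt ?_⟩
      intro a ha
      rw [Order.succ_eq_add_one]
      rcases lt_or_eq_of_le (by rw [← Order.succ_eq_add_one]; exact Order.succ_le_of_lt ha :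
        a + 1 ≤ l) with h | h
      · exact h
      · exfalso
        have hsub : S ∩ Set.Iio (a+1) ⊆ (S ∩ Set.Iio a) ∪ {a} := by
          rintro β ⟨hβS, hβ⟩
          rw [Set.mem_Iio, ← Order.succ_eq_add_one, Order.lt_succ_iff] at hβ
          rcases lt_or_eq_of_le hβ with h' | h'
          · exact Or.inl ⟨hβS, h'⟩
          · exact Or.inr (by simp [h'])
        have : (S ∩ Set.Iio (a+1)).Finite :=
          Set.Finite.subset ((hfinlt a ha).union (Set.finite_singleton a)) hsub
        exact (h ▸ hlT) this
    have hωl : Ordinal.omega0 < l := by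
      obtain ⟨s, hsS, hsl⟩ := hlT.nonempty
      exact lt_of_le_of_lt (hSprop s hsS).1 hsl
    haveI : Nonempty ↥(Set.Iio l) :=
      ⟨⟨0, pos_iff_ne_zero.mpr hl0⟩⟩
    have htend := hlim l hωl hld hllim v
    rw [Metric.tendsto_atTop] at htend
    obtain ⟨N, hN⟩ := htend (ε/2) (by positivity)
    have hNl : N.1 < l := N.2
    have hinf2 : ((S ∩ Set.Iio l) \ (S ∩ Set.Iio N.1)).Infinite :=
      hlT.diff (hfinlt N.1 hNl)
    obtain ⟨α, hα⟩ := hinf2.nonempty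
    have hαS : α ∈ S := hα.1.1
    have hαl : α < l := hα.1.2
    have hNα : N.1 ≤ α := by
      by_contra h
      exact hα.2 ⟨hαS, not_le.mp h⟩
    have hα1l : α + 1 < l := by
      rw [← Order.succ_eq_add_one]; exact hllim.succ_lt hαl
    have e1 := hN ⟨α, hαl⟩ (by exact hNα)
    have e2 := hN ⟨α+1, hα1l⟩ (by exact hNα.trans (hself α).le)
    have hlt : ‖P (α+1) v - P α v‖ < ε := by
      have := dist_triangle (P (α+1) v) (P l v) (P α v)
      rw [dist_comm (P l v) (P α v)] at this
      calc ‖P (α+1) v - P α v‖ = dist (P (α+1) v) (P α v) := (dist_eq_norm _ _).symm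
        _ ≤ dist (P (α+1) v) (P l v) + dist (P α v) (P l v) := this
        _ < ε/2 + ε/2 := add_lt_add e2 e1
        _ = ε := by ring
    exact absurd (hSprop α hαS).2.2 (not_le.mpr hlt)
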